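/- Let m ≥ 1, and let a, b ∈ ℂ be nonzero with a ≠ b. For an m-tuple x = (x_1, …, x_m) of nonzero complex numbers with x_s ≠ parameter, let F[x, c, λ] denote the (m+1)×(m+1) matrix with diagonal entries −x_{m+1−k}/(x_{m+1−k} − c) (k = 1,…,m), superdiagonal entries c/(λ(x_{m+1−k} − c)) (k = 1,…,m), bottom-left entry (c/λ)·x_m⋯x_1, bottom-right entry −1, and zeros elsewhere. Given m-tuples x (with parameter a) and y (with parameter b), define x' = S_{a,b}(x, y) by x'_1 = (b·y_m⋯y_1 − a·x_m⋯x_1)(y_1 − b)/(x_m⋯x_2·(b·x_1 − a·y_1)) and x'_s = x_s·(y_s − b)(b·x_{s−1} − a·y_{s−1})/((y_{s−1} − b)(b·x_s − a·y_s)) for s = 2,…,m, and define y' = S_{b,a}(y, x) by the same formulas with the roles of (x, a) and (y, b) interchanged. Then, whenever all denominators involved are nonzero and all entries of the matrices are defined, the refactorization identity F[y', b, λ]·F[x, a, λ] = F[x', a, λ]·F[y, b, λ] holds for every λ ≠ 0. -/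

import Mathlib

open Finset

/-- The Darboux matrix `F[x, c, λ]` of the Bogoyavlensky lattice, built from the
edge variables `x_1, …, x_m` and the parameter `c`. -/
noncomputable def bogFmat (m : ℕ) (x : ℕ → ℂ) (c lam : ℂ) :
    Matrix (Fin (m + 1)) (Fin (m + 1)) ℂ :=
  Matrix.of fun k l =>
    if (k : ℕ) < m then
      (if l = k then -x (m - (k : ℕ)) / (x (m - (k : ℕ)) - c)
       else if (l : ℕ) = (k : ℕ) + 1 then c / (lam * (x (m - (k : ℕ)) - c))
       else 0)
    else if (l : ℕ) = 0 then (c / lam) * ∏ s ∈ Finset.range m, x (s + 1)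
    else if (l : ℕ) = m then -1
    else 0

/-- The `m`-component superposition map `S_{p,q}(x, y)` of the Bogoyavlensky lattice:
`x'_1 = (q y_m⋯y_1 - p x_m⋯x_1)(y_1 - q)/(x_m⋯x_2 (q x_1 - p y_1))`,
`x'_s = x_s (y_s - q)(q x_{s-1} - p y_{s-1})/((y_{s-1} - q)(q x_s - p y_s))`, `s ≥ 2`. -/
noncomputable def bogSuperpose (m : ℕ) (p q : ℂ) (x y : ℕ → ℂ) : ℕ → ℂ := fun s =>
  if s = 1 then
    (q * (∏ r ∈ Finset.range m, y (r + 1)) - p * ∏ r ∈ Finset.range m, x (r + 1))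
      * (y 1 - q) / ((∏ r ∈ Finset.range (m - 1), x (r + 2)) * (q * x 1 - p * y 1))
  else
    x s * (y s - q) * (q * x (s - 1) - p * y (s - 1))
      / ((y (s - 1) - q) * (q * x s - p * y s))

/-! ### Auxiliary lemmas -/

lemma bog_sub_div_eq (N D e : ℂ) (hD : D ≠ 0) : N / D - e = (N - e * D) / D := by
  field_simp

lemma bogSuperpose_one (m : ℕ) (p q : ℂ) (x y : ℕ → ℂ) :
    bogSuperpose m p q x y 1 =
      (q * (∏ r ∈ Finset.range m, y (r + 1)) - p * ∏ r ∈ Finset.range m, x (r + 1))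
        * (y 1 - q) / ((∏ r ∈ Finset.range (m - 1), x (r + 2)) * (q * x 1 - p * y 1)) := by
  simp [bogSuperpose]

lemma bogSuperpose_of_two_le (m : ℕ) (p q : ℂ) (x y : ℕ → ℂ) (s : ℕ) (hs : 2 ≤ s) :
    bogSuperpose m p q x y s =
      x s * (y s - q) * (q * x (s - 1) - p * y (s - 1))
        / ((y (s - 1) - q) * (q * x s - p * y s)) := by
  have : s ≠ 1 := by omega
  simp [bogSuperpose, this]

/-- Row expansion of multiplication by a Darboux matrix. -/
lemma bogFmat_mul_apply (m : ℕ) (hm : 1 ≤ m) (x : ℕ → ℂ) (c lam : ℂ)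
    (B : Matrix (Fin (m + 1)) (Fin (m + 1)) ℂ) (k l : Fin (m + 1)) :
    (bogFmat m x c lam * B) k l =
      if (k : ℕ) < m then
        -x (m - (k : ℕ)) / (x (m - (k : ℕ)) - c) * B k l
          + c / (lam * (x (m - (k : ℕ)) - c)) * B (k + 1) l
      else (c / lam * ∏ s ∈ Finset.range m, x (s + 1)) * B 0 l
          + (-1) * B (Fin.last m) l := by
  rw [Matrix.mul_apply]
  by_cases h : (k : ℕ) < m
  · rw [if_pos h]
    have hkv : ((k + 1 : Fin (m + 1)) : ℕ) = (k : ℕ) + 1 := by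
      rw [Fin.val_add_one_of_lt]; rw [Fin.lt_def, Fin.val_last]; omega
    have key : ∀ j : Fin (m + 1), bogFmat m x c lam k j * B j l
        = (if j = k then -x (m - (k : ℕ)) / (x (m - (k : ℕ)) - c) * B j l else 0)
          + (if j = k + 1 then c / (lam * (x (m - (k : ℕ)) - c)) * B j l else 0) := by
      intro j
      simp only [bogFmat, Matrix.of_apply, if_pos h]
      by_cases h1 : j = k
      · have h2 : ¬ j = k + 1 := by
          rw [Fin.ext_iff, hkv, h1]; omega
        rw [if_pos h1, if_pos h1, if_neg h2, add_zero]
      · have h1' : ¬ (j : ℕ) = (k : ℕ) := fun hh => h1 (Fin.ext hh)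
        rw [if_neg h1, if_neg h1]
        by_cases h2 : (j : ℕ) = (k : ℕ) + 1
        · have h2' : j = k + 1 := Fin.ext (by rw [hkv]; exact h2)
          rw [if_pos h2, if_pos h2', zero_add]
        · have h2' : ¬ j = k + 1 := by
            rw [Fin.ext_iff, hkv]; exact h2
          rw [if_neg h2, if_neg h2', zero_mul, add_zero]
    rw [Finset.sum_congr rfl fun j _ => key j, Finset.sum_add_distrib,
      Finset.sum_ite_eq' Finset.univ k, Finset.sum_ite_eq' Finset.univ]
    simp
  · rw [if_neg h]
    have key : ∀ j : Fin (m + 1), bogFmat m x c lam k j * B j l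
        = (if j = 0 then (c / lam * ∏ s ∈ Finset.range m, x (s + 1)) * B j l else 0)
          + (if j = Fin.last m then (-1) * B j l else 0) := by
      intro j
      simp only [bogFmat, Matrix.of_apply, if_neg h]
      by_cases h1 : (j : ℕ) = 0
      · have h1' : j = 0 := by rw [Fin.ext_iff, Fin.val_zero]; exact h1
        have h2 : ¬ j = Fin.last m := by
          rw [Fin.ext_iff, Fin.val_last]; omega
        rw [if_pos h1, if_pos h1', if_neg h2, add_zero]
      · have h1' : ¬ j = 0 := by
          rw [Fin.ext_iff, Fin.val_zero]; exact h1
        rw [if_neg h1, if_neg h1']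
        by_cases h2 : (j : ℕ) = m
        · have h2' : j = Fin.last m := by rw [Fin.ext_iff, Fin.val_last]; exact h2
          rw [if_pos h2, if_pos h2', zero_add]
        · have h2' : ¬ j = Fin.last m := by
            rw [Fin.ext_iff, Fin.val_last]; exact h2
          rw [if_neg h2, if_neg h2', zero_mul, add_zero]
    rw [Finset.sum_congr rfl fun j _ => key j, Finset.sum_add_distrib,
      Finset.sum_ite_eq' Finset.univ, Finset.sum_ite_eq' Finset.univ]
    simp

/-- Shifting a product of `m` consecutive values. -/
lemma bog_prod_shift (m : ℕ) (hm : 1 ≤ m) (f : ℕ → ℂ) :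
    ∏ r ∈ Finset.range m, f (r + 1) = (∏ r ∈ Finset.range (m - 1), f (r + 2)) * f 1 := by
  obtain ⟨n, rfl⟩ : ∃ n, m = n + 1 := ⟨m - 1, by omega⟩
  rw [Finset.prod_range_succ']
  norm_num

/-- Entries of the Darboux matrix in a non-bottom row, with conditions on `ℕ`. -/
lemma bogFmat_apply_lt (m : ℕ) (x : ℕ → ℂ) (c lam : ℂ) (k l : Fin (m + 1))
    (h : (k : ℕ) < m) :
    bogFmat m x c lam k l =
      if (l : ℕ) = (k : ℕ) then -x (m - (k : ℕ)) / (x (m - (k : ℕ)) - c)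
      else if (l : ℕ) = (k : ℕ) + 1 then c / (lam * (x (m - (k : ℕ)) - c))
      else 0 := by
  simp only [bogFmat, Matrix.of_apply, if_pos h, Fin.ext_iff]

/-- Entries of the Darboux matrix in the bottom row. -/
lemma bogFmat_apply_last (m : ℕ) (x : ℕ → ℂ) (c lam : ℂ) (k l : Fin (m + 1))
    (h : ¬ (k : ℕ) < m) :
    bogFmat m x c lam k l =
      if (l : ℕ) = 0 then (c / lam) * ∏ s ∈ Finset.range m, x (s + 1)
      else if (l : ℕ) = m then -1
      else 0 := by
  simp only [bogFmat, Matrix.of_apply, if_neg h]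

/-- Telescoping product of the superposition variables with index `≥ 2`. -/
lemma bogSuperpose_prod_tail (m : ℕ) (p q : ℂ) (x y : ℕ → ℂ)
    (hyq : ∀ s, 1 ≤ s → s ≤ m → y s - q ≠ 0)
    (hden : ∀ s, 1 ≤ s → s ≤ m → q * x s - p * y s ≠ 0) :
    ∀ n, n + 1 ≤ m →
      ∏ r ∈ Finset.range n, bogSuperpose m p q x y (r + 2)
        = (∏ r ∈ Finset.range n, x (r + 2)) * ((y (n + 1) - q) * (q * x 1 - p * y 1))
          / ((y 1 - q) * (q * x (n + 1) - p * y (n + 1))) := by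
  intro n
  induction n with
  | zero =>
      intro h
      simp only [Finset.range_zero, Finset.prod_empty, one_mul]
      rw [div_self]
      exact mul_ne_zero (hyq 1 le_rfl h) (hden 1 le_rfl h)
  | succ n ih =>
      intro h
      rw [Finset.prod_range_succ, Finset.prod_range_succ, ih (by omega),
        bogSuperpose_of_two_le m p q x y (n + 2) (by omega)]
      have e1 : n + 2 - 1 = n + 1 := rfl
      rw [e1]
      have n1 : y (n + 1) - q ≠ 0 := hyq (n + 1) (by omega) (by omega)
      have n2 : y (n + 2) - q ≠ 0 := hyq (n + 2) (by omega) (by omega)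
      have n3 : q * x (n + 1) - p * y (n + 1) ≠ 0 := hden (n + 1) (by omega) (by omega)
      have n4 : q * x (n + 2) - p * y (n + 2) ≠ 0 := hden (n + 2) (by omega) (by omega)
      have n5 : y 1 - q ≠ 0 := hyq 1 le_rfl (by omega)
      have n6 : q * x 1 - p * y 1 ≠ 0 := hden 1 le_rfl (by omega)
      have n3' : q * x (n + 1) - y (n + 1) * p ≠ 0 := by rwa [mul_comm (y (n + 1)) p]
      field_simp

/-- Closed form for the product of all superposition variables. -/
lemma bogSuperpose_prod (m : ℕ) (hm : 1 ≤ m) (p q : ℂ) (x y : ℕ → ℂ)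
    (hx0 : ∀ s, 1 ≤ s → s ≤ m → x s ≠ 0)
    (hyq : ∀ s, 1 ≤ s → s ≤ m → y s - q ≠ 0)
    (hden : ∀ s, 1 ≤ s → s ≤ m → q * x s - p * y s ≠ 0) :
    ∏ r ∈ Finset.range m, bogSuperpose m p q x y (r + 1)
      = (q * (∏ r ∈ Finset.range m, y (r + 1)) - p * ∏ r ∈ Finset.range m, x (r + 1))
          * (y m - q) / (q * x m - p * y m) := by
  obtain ⟨n, rfl⟩ : ∃ n, m = n + 1 := ⟨m - 1, by omega⟩
  rw [Finset.prod_range_succ' (fun r => bogSuperpose (n + 1) p q x y (r + 1)) n]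
  rw [Finset.prod_range_succ' (fun r => x (r + 1)) n, Finset.prod_range_succ' (fun r => y (r + 1)) n]
  rw [bogSuperpose_prod_tail (n + 1) p q x y hyq hden n (by omega)]
  rw [bogSuperpose_one]
  rw [Finset.prod_range_succ' (fun r => x (r + 1)) n, Finset.prod_range_succ' (fun r => y (r + 1)) n]
  have e1 : n + 1 - 1 = n := rfl
  rw [e1]
  have n1 : y 1 - q ≠ 0 := hyq 1 le_rfl (by omega)
  have n2 : q * x 1 - p * y 1 ≠ 0 := hden 1 le_rfl (by omega)
  have n3 : y (n + 1) - q ≠ 0 := hyq (n + 1) (by omega) le_rfl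
  have n4 : q * x (n + 1) - p * y (n + 1) ≠ 0 := hden (n + 1) (by omega) le_rfl
  have n5 : (∏ r ∈ Finset.range n, x (r + 2)) ≠ 0 :=
    Finset.prod_ne_zero_iff.2 fun r hr => hx0 (r + 2) (by omega)
      (by simp at hr; omega)
  field_simp

lemma bog_flatD (u e N M D : ℂ) (hD : D ≠ 0) (hu : u = N / D) (hue : u - e = M / D) :
    -u / (u - e) = -N / M := by
  rw [hue, hu, neg_div, neg_div, div_div_div_cancel_right₀]
  exact hD

lemma bog_flatE (u e c lam M D : ℂ) (hM : M ≠ 0) (hlam : lam ≠ 0)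
    (hue : u - e = M / D) : c / (lam * (u - e)) = c * D / (lam * M) := by
  rw [hue]
  field_simp

set_option maxHeartbeats 1600000 in
/-- Nonlinear superposition (permutability) of two Darboux transformations for the
Bogoyavlensky lattice: the refactorization identity
`F[y', b, λ] F[x, a, λ] = F[x', a, λ] F[y, b, λ]` with `x' = S_{a,b}(x,y)`,
`y' = S_{b,a}(y,x)`. -/
theorem bogoyavlensky_superposition_refactorization
    (m : ℕ) (hm : 1 ≤ m) (a b : ℂ) (ha : a ≠ 0) (hb : b ≠ 0) (hab : a ≠ b)
    (x y : ℕ → ℂ)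
    (hx0 : ∀ s, 1 ≤ s → s ≤ m → x s ≠ 0) (hxa : ∀ s, 1 ≤ s → s ≤ m → x s ≠ a)
    (hy0 : ∀ s, 1 ≤ s → s ≤ m → y s ≠ 0) (hyb : ∀ s, 1 ≤ s → s ≤ m → y s ≠ b)
    (hden : ∀ s, 1 ≤ s → s ≤ m → b * x s - a * y s ≠ 0)
    (hx'a : ∀ s, 1 ≤ s → s ≤ m → bogSuperpose m a b x y s ≠ a)
    (hy'b : ∀ s, 1 ≤ s → s ≤ m → bogSuperpose m b a y x s ≠ b) :
    ∀ lam : ℂ, lam ≠ 0 →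
      bogFmat m (bogSuperpose m b a y x) b lam * bogFmat m x a lam
        = bogFmat m (bogSuperpose m a b x y) a lam * bogFmat m y b lam := by
  intro lam hlam
  have hXa : ∀ s, 1 ≤ s → s ≤ m → x s - a ≠ 0 := fun s h1 h2 => sub_ne_zero.2 (hxa s h1 h2)
  have hYb : ∀ s, 1 ≤ s → s ≤ m → y s - b ≠ 0 := fun s h1 h2 => sub_ne_zero.2 (hyb s h1 h2)
  have hD' : ∀ s, 1 ≤ s → s ≤ m → a * y s - b * x s ≠ 0 := fun s h1 h2 hh =>
    hden s h1 h2 (by linear_combination -hh)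
  have hP2x : (∏ r ∈ Finset.range (m - 1), x (r + 2)) ≠ 0 :=
    Finset.prod_ne_zero_iff.2 fun r hr => hx0 (r + 2) (by omega) (by simp at hr; omega)
  have hP2y : (∏ r ∈ Finset.range (m - 1), y (r + 2)) ≠ 0 :=
    Finset.prod_ne_zero_iff.2 fun r hr => hy0 (r + 2) (by omega) (by simp at hr; omega)
  have hPx : ∏ r ∈ Finset.range m, x (r + 1)
      = (∏ r ∈ Finset.range (m - 1), x (r + 2)) * x 1 := bog_prod_shift m hm x
  have hPy : ∏ r ∈ Finset.range m, y (r + 1)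
      = (∏ r ∈ Finset.range (m - 1), y (r + 2)) * y 1 := bog_prod_shift m hm y
  have hPσ : ∏ r ∈ Finset.range m, bogSuperpose m a b x y (r + 1)
      = (b * (∏ r ∈ Finset.range m, y (r + 1)) - a * ∏ r ∈ Finset.range m, x (r + 1))
          * (y m - b) / (b * x m - a * y m) :=
    bogSuperpose_prod m hm a b x y hx0 hYb hden
  have hPτ : ∏ r ∈ Finset.range m, bogSuperpose m b a y x (r + 1)
      = (a * (∏ r ∈ Finset.range m, x (r + 1)) - b * ∏ r ∈ Finset.range m, y (r + 1))
          * (x m - a) / (a * y m - b * x m) :=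
    bogSuperpose_prod m hm b a y x hy0 hXa hD'
  ext k l
  rw [bogFmat_mul_apply m hm (bogSuperpose m b a y x) b lam (bogFmat m x a lam) k l,
    bogFmat_mul_apply m hm (bogSuperpose m a b x y) a lam (bogFmat m y b lam) k l]
  by_cases hk : (k : ℕ) < m
  · rw [if_pos hk, if_pos hk]
    have hk1v : ((k + 1 : Fin (m + 1)) : ℕ) = (k : ℕ) + 1 := by
      rw [Fin.val_add_one_of_lt]; rw [Fin.lt_def, Fin.val_last]; omega
    rw [bogFmat_apply_lt m x a lam k l hk, bogFmat_apply_lt m y b lam k l hk]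
    by_cases hk1 : (k : ℕ) + 1 < m
    · -- generic rows: s = m - k ≥ 2
      rw [bogFmat_apply_lt m x a lam (k + 1) l (by rw [hk1v]; exact hk1),
        bogFmat_apply_lt m y b lam (k + 1) l (by rw [hk1v]; exact hk1), hk1v,
        show m - ((k : ℕ) + 1) = m - (k : ℕ) - 1 by omega]
      set s := m - (k : ℕ) with hs
      have h2s : 2 ≤ s := by omega
      have hsm : s ≤ m := by omega
      have e1 : y (s - 1) - b ≠ 0 := hYb (s - 1) (by omega) (by omega)
      have e2 : b * x s - a * y s ≠ 0 := hden s (by omega) (by omega)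
      have e3 : x (s - 1) - a ≠ 0 := hXa (s - 1) (by omega) (by omega)
      have e4 : a * y s - b * x s ≠ 0 := hD' s (by omega) (by omega)
      have e5 : x s - a ≠ 0 := hXa s (by omega) (by omega)
      have e6 : y s - b ≠ 0 := hYb s (by omega) (by omega)
      have hDσ : (y (s - 1) - b) * (b * x s - a * y s) ≠ 0 := mul_ne_zero e1 e2
      have hDτ : (x (s - 1) - a) * (a * y s - b * x s) ≠ 0 := mul_ne_zero e3 e4
      have hEσ : bogSuperpose m a b x y s
          = x s * (y s - b) * (b * x (s - 1) - a * y (s - 1))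
            / ((y (s - 1) - b) * (b * x s - a * y s)) :=
        bogSuperpose_of_two_le m a b x y s h2s
      have hEτ : bogSuperpose m b a y x s
          = y s * (x s - a) * (a * y (s - 1) - b * x (s - 1))
            / ((x (s - 1) - a) * (a * y s - b * x s)) :=
        bogSuperpose_of_two_le m b a y x s h2s
      have hEσa : bogSuperpose m a b x y s - a
          = (x s * (y s - b) * (b * x (s - 1) - a * y (s - 1))
              - a * ((y (s - 1) - b) * (b * x s - a * y s)))
            / ((y (s - 1) - b) * (b * x s - a * y s)) := by
        rw [hEσ, bog_sub_div_eq _ _ _ hDσ]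
      have hEτb : bogSuperpose m b a y x s - b
          = (y s * (x s - a) * (a * y (s - 1) - b * x (s - 1))
              - b * ((x (s - 1) - a) * (a * y s - b * x s)))
            / ((x (s - 1) - a) * (a * y s - b * x s)) := by
        rw [hEτ, bog_sub_div_eq _ _ _ hDτ]
      have hMσ : x s * (y s - b) * (b * x (s - 1) - a * y (s - 1))
          - a * ((y (s - 1) - b) * (b * x s - a * y s)) ≠ 0 := by
        have h := sub_ne_zero.2 (hx'a s (by omega) (by omega))
        rw [hEσa, div_ne_zero_iff] at h; exact h.1
      have hMτ : y s * (x s - a) * (a * y (s - 1) - b * x (s - 1))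
          - b * ((x (s - 1) - a) * (a * y s - b * x s)) ≠ 0 := by
        have h := sub_ne_zero.2 (hy'b s (by omega) (by omega))
        rw [hEτb, div_ne_zero_iff] at h; exact h.1
      rw [bog_flatD _ b _ _ _ hDτ hEτ hEτb, bog_flatD _ a _ _ _ hDσ hEσ hEσa,
        bog_flatE _ b b lam _ _ hMτ hlam hEτb, bog_flatE _ a a lam _ _ hMσ hlam hEσa]
      split_ifs <;>
        first
          | (exfalso; omega)
          | ring1
          | (generalize hσ : x s * (y s - b) * (b * x (s - 1) - a * y (s - 1)) - a * ((y (s - 1) - b) * (b * x s - a * y s)) = Mσ at hMσ ⊢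
             generalize hτ : y s * (x s - a) * (a * y (s - 1) - b * x (s - 1)) - b * ((x (s - 1) - a) * (a * y s - b * x s)) = Mτ at hMτ ⊢
             field_simp [e1, e2, e3, e4, e5, e6, hMσ, hMτ, hlam]; subst hσ hτ; ring1)
    · -- row k = m - 1 : s = 1
      rw [bogFmat_apply_last m x a lam (k + 1) l (by rw [hk1v]; omega),
        bogFmat_apply_last m y b lam (k + 1) l (by rw [hk1v]; omega),
        show m - (k : ℕ) = 1 by omega, hPx, hPy]
      have e1 : y 1 - b ≠ 0 := hYb 1 le_rfl hm
      have e2 : b * x 1 - a * y 1 ≠ 0 := hden 1 le_rfl hm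
      have e3 : x 1 - a ≠ 0 := hXa 1 le_rfl hm
      have e4 : a * y 1 - b * x 1 ≠ 0 := hD' 1 le_rfl hm
      have hDσ : (∏ r ∈ Finset.range (m - 1), x (r + 2)) * (b * x 1 - a * y 1) ≠ 0 :=
        mul_ne_zero hP2x e2
      have hDτ : (∏ r ∈ Finset.range (m - 1), y (r + 2)) * (a * y 1 - b * x 1) ≠ 0 :=
        mul_ne_zero hP2y e4
      have hEσ : bogSuperpose m a b x y 1
          = (b * ((∏ r ∈ Finset.range (m - 1), y (r + 2)) * y 1)
              - a * ((∏ r ∈ Finset.range (m - 1), x (r + 2)) * x 1)) * (y 1 - b)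
            / ((∏ r ∈ Finset.range (m - 1), x (r + 2)) * (b * x 1 - a * y 1)) := by
        rw [bogSuperpose_one, hPx, hPy]
      have hEτ : bogSuperpose m b a y x 1
          = (a * ((∏ r ∈ Finset.range (m - 1), x (r + 2)) * x 1)
              - b * ((∏ r ∈ Finset.range (m - 1), y (r + 2)) * y 1)) * (x 1 - a)
            / ((∏ r ∈ Finset.range (m - 1), y (r + 2)) * (a * y 1 - b * x 1)) := by
        rw [bogSuperpose_one, hPx, hPy]
      have hEσa : bogSuperpose m a b x y 1 - a
          = ((b * ((∏ r ∈ Finset.range (m - 1), y (r + 2)) * y 1)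
              - a * ((∏ r ∈ Finset.range (m - 1), x (r + 2)) * x 1)) * (y 1 - b)
              - a * ((∏ r ∈ Finset.range (m - 1), x (r + 2)) * (b * x 1 - a * y 1)))
            / ((∏ r ∈ Finset.range (m - 1), x (r + 2)) * (b * x 1 - a * y 1)) := by
        rw [hEσ, bog_sub_div_eq _ _ _ hDσ]
      have hEτb : bogSuperpose m b a y x 1 - b
          = ((a * ((∏ r ∈ Finset.range (m - 1), x (r + 2)) * x 1)
              - b * ((∏ r ∈ Finset.range (m - 1), y (r + 2)) * y 1)) * (x 1 - a)
              - b * ((∏ r ∈ Finset.range (m - 1), y (r + 2)) * (a * y 1 - b * x 1)))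
            / ((∏ r ∈ Finset.range (m - 1), y (r + 2)) * (a * y 1 - b * x 1)) := by
        rw [hEτ, bog_sub_div_eq _ _ _ hDτ]
      have hMσ : (b * ((∏ r ∈ Finset.range (m - 1), y (r + 2)) * y 1)
              - a * ((∏ r ∈ Finset.range (m - 1), x (r + 2)) * x 1)) * (y 1 - b)
              - a * ((∏ r ∈ Finset.range (m - 1), x (r + 2)) * (b * x 1 - a * y 1)) ≠ 0 := by
        have h := sub_ne_zero.2 (hx'a 1 le_rfl hm)
        rw [hEσa, div_ne_zero_iff] at h; exact h.1
      have hMτ : (a * ((∏ r ∈ Finset.range (m - 1), x (r + 2)) * x 1)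
              - b * ((∏ r ∈ Finset.range (m - 1), y (r + 2)) * y 1)) * (x 1 - a)
              - b * ((∏ r ∈ Finset.range (m - 1), y (r + 2)) * (a * y 1 - b * x 1)) ≠ 0 := by
        have h := sub_ne_zero.2 (hy'b 1 le_rfl hm)
        rw [hEτb, div_ne_zero_iff] at h; exact h.1
      rw [bog_flatD _ b _ _ _ hDτ hEτ hEτb, bog_flatD _ a _ _ _ hDσ hEσ hEσa,
        bog_flatE _ b b lam _ _ hMτ hlam hEτb, bog_flatE _ a a lam _ _ hMσ hlam hEσa]
      split_ifs <;>
        first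
          | (exfalso; omega)
          | ring1
          | (generalize hσ : (b * ((∏ r ∈ Finset.range (m - 1), y (r + 2)) * y 1) - a * ((∏ r ∈ Finset.range (m - 1), x (r + 2)) * x 1)) * (y 1 - b) - a * ((∏ r ∈ Finset.range (m - 1), x (r + 2)) * (b * x 1 - a * y 1)) = Mσ at hMσ ⊢
             generalize hτ : (a * ((∏ r ∈ Finset.range (m - 1), x (r + 2)) * x 1) - b * ((∏ r ∈ Finset.range (m - 1), y (r + 2)) * y 1)) * (x 1 - a) - b * ((∏ r ∈ Finset.range (m - 1), y (r + 2)) * (a * y 1 - b * x 1)) = Mτ at hMτ ⊢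
             field_simp [e1, e2, e3, e4, hP2x, hP2y, hMσ, hMτ, hlam]; subst hσ hτ; ring1)
  · -- bottom row
    rw [if_neg hk, if_neg hk]
    rw [bogFmat_apply_lt m x a lam 0 l (by simp only [Fin.val_zero]; omega),
      bogFmat_apply_lt m y b lam 0 l (by simp only [Fin.val_zero]; omega),
      bogFmat_apply_last m x a lam (Fin.last m) l (by simp only [Fin.val_last]; omega),
      bogFmat_apply_last m y b lam (Fin.last m) l (by simp only [Fin.val_last]; omega),
      hPσ, hPτ]
    simp only [Fin.val_zero, Nat.sub_zero, Nat.zero_add]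
    have e1 : y m - b ≠ 0 := hYb m hm le_rfl
    have e2 : b * x m - a * y m ≠ 0 := hden m hm le_rfl
    have e3 : x m - a ≠ 0 := hXa m hm le_rfl
    have e4 : a * y m - b * x m ≠ 0 := hD' m hm le_rfl
    split_ifs <;>
      first
        | (exfalso; omega)
        | ring1
        | (field_simp [e1, e2, e3, e4, hlam]; ring1)
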